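/- Let n ≥ 1, let A, B : Fin n → Fin n → ℝ have all entries in [0.9, 1.1], let k ∈ Fin n and δ ≥ 0, and let G_t = (1−t)G₀ + tG₁ be the associated homotopy of (n+1)×(n+1) bimatrix games. Let t ∈ (0,1] and let (x, y) be a Nash equilibrium of G_t with x(0) < 1 and y(0) < 1. Define x'(i) = x(i+1)/(1 − x(0)) and y'(j) = y(j+1)/(1 − y(0)), and set b = δ·x(0)/(1 − x(0)). Then (x', y') is a Nash equilibrium of the n×n game with payoff matrices (A, B^b), where B^b(i,j) = B(i,j) + b if j = k and B^b(i,j) = B(i,j) otherwise. -/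

import Mathlib

open Finset in
/-- Expected payoff Σ_{i,j} x(i)·M(i,j)·y(j) of the game matrix M under mixed
strategies x (row) and y (column). -/
def payoff {m : ℕ} (M : Fin m → Fin m → ℝ) (x y : Fin m → ℝ) : ℝ :=
  ∑ i, ∑ j, x i * M i j * y j

/-- (x,y) is a Nash equilibrium of the bimatrix game with row payoff matrix R and
column payoff matrix C. -/
def NashEq {m : ℕ} (R C : Fin m → Fin m → ℝ) (x y : Fin m → ℝ) : Prop :=
  x ∈ stdSimplex ℝ (Fin m) ∧ y ∈ stdSimplex ℝ (Fin m) ∧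
  (∀ x' ∈ stdSimplex ℝ (Fin m), payoff R x' y ≤ payoff R x y) ∧
  (∀ y' ∈ stdSimplex ℝ (Fin m), payoff C x y' ≤ payoff C x y)

/-- Row payoff matrix R₁ of the game G₁: R₁(0,j) = 0, R₁(i+1,0) = −1,
R₁(i+1,j+1) = A(i,j). -/
def R1 {n : ℕ} (A : Fin n → Fin n → ℝ) (i j : Fin (n + 1)) : ℝ :=
  Fin.cases 0 (fun i' => Fin.cases (-1) (fun j' => A i' j') j) i

/-- Column payoff matrix C₁ of the game G₁: C₁(0,0) = −1, C₁(0,j+1) = 3/4 + δ if j = k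
and 3/4 otherwise, C₁(i+1,0) = 3/4, C₁(i+1,j+1) = B(i,j). -/
noncomputable def C1 {n : ℕ} (B : Fin n → Fin n → ℝ) (k : Fin n) (δ : ℝ) (i j : Fin (n + 1)) : ℝ :=
  Fin.cases
    (Fin.cases (-1) (fun j' => if j' = k then 3 / 4 + δ else 3 / 4) j)
    (fun i' => Fin.cases (3 / 4) (fun j' => B i' j') j) i

/-- Row payoff matrix R₀ of the game G₀: payoff 1 on row 0, payoff 0 elsewhere. -/
noncomputable def R0 {n : ℕ} (i _j : Fin (n + 1)) : ℝ := if i = 0 then 1 else 0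

/-- Column payoff matrix C₀ of the game G₀: payoff 1 on column 0, payoff 0 elsewhere. -/
noncomputable def C0 {n : ℕ} (_i j : Fin (n + 1)) : ℝ := if j = 0 then 1 else 0
open Finset

lemma payoff_row {n : ℕ} (A : Fin n → Fin n → ℝ) (t : ℝ) (x y : Fin (n+1) → ℝ) :
    payoff (fun i j => (1 - t) * R0 i j + t * R1 A i j) x y
      = (1 - t) * x 0 * (∑ j, y j) - t * (∑ i : Fin n, x i.succ) * y 0
        + t * ∑ i : Fin n, ∑ j : Fin n, x i.succ * A i j * y j.succ := by
  unfold payoff R0 R1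
  simp only [Fin.sum_univ_succ, Fin.cases_zero, Fin.cases_succ, Fin.succ_ne_zero,
    if_true, if_false, ite_true, ite_false, mul_one, mul_zero, add_zero, zero_add,
    Finset.mul_sum, Finset.sum_mul, Finset.sum_sub_distrib, Finset.sum_add_distrib]
  have h1 : ∑ i : Fin n, x i.succ * (t * -1) * y 0 = -∑ i : Fin n, t * x i.succ * y 0 := by
    rw [← Finset.sum_neg_distrib]; exact Finset.sum_congr rfl fun i _ => by ring
  have h2 : ∑ j : Fin n, x 0 * (1 - t) * y j.succ = (1 - t) * x 0 * ∑ j : Fin n, y j.succ := by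
    rw [Finset.mul_sum]; exact Finset.sum_congr rfl fun j _ => by ring
  have h3 : ∑ i : Fin n, ∑ j : Fin n, x i.succ * (t * A i j) * y j.succ
      = ∑ i : Fin n, ∑ j : Fin n, t * (x i.succ * A i j * y j.succ) :=
    Finset.sum_congr rfl fun i _ => Finset.sum_congr rfl fun j _ => by ring
  rw [h1, h2, h3]; ring

lemma payoff_col {n : ℕ} (B : Fin n → Fin n → ℝ) (k : Fin n) (δ t : ℝ) (x y : Fin (n+1) → ℝ) :
    payoff (fun i j => (1 - t) * C0 i j + t * C1 B k δ i j) x y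
      = (x 0 * (1 - 2*t) + (1 - t/4) * ∑ i : Fin n, x i.succ) * y 0
        + t * (3/4) * x 0 * (∑ j : Fin n, y j.succ)
        + t * δ * x 0 * y k.succ
        + t * ∑ i : Fin n, ∑ j : Fin n, x i.succ * B i j * y j.succ := by
  unfold payoff C0 C1
  simp only [Fin.sum_univ_succ, Fin.cases_zero, Fin.cases_succ, Fin.succ_ne_zero,
    if_true, if_false, ite_true, ite_false, mul_one, mul_zero, add_zero, zero_add,
    Finset.mul_sum, Finset.sum_mul, Finset.sum_sub_distrib, Finset.sum_add_distrib]
  have h1 : ∑ i : Fin n, x i.succ * (1 - t + t * (3/4)) * y 0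
      = (∑ i : Fin n, (1 - t/4) * x i.succ) * y 0 := by
    rw [Finset.sum_mul]; exact Finset.sum_congr rfl fun i _ => by ring
  have h2 : ∑ j : Fin n, x 0 * (t * if j = k then 3 / 4 + δ else 3 / 4) * y j.succ
      = (∑ j : Fin n, t * (3/4) * x 0 * y j.succ) + t * δ * x 0 * y k.succ := by
    have hb : ∀ j : Fin n, x 0 * (t * if j = k then 3 / 4 + δ else 3 / 4) * y j.succ
        = t * (3/4) * x 0 * y j.succ + (if j = k then t * δ * x 0 * y j.succ else 0) := by
      intro j; split <;> ring
    rw [Finset.sum_congr rfl fun j _ => hb j, Finset.sum_add_distrib,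
      Finset.sum_ite_eq' univ k]
    simp
  have h3 : ∑ i : Fin n, ∑ j : Fin n, x i.succ * (t * B i j) * y j.succ
      = ∑ i : Fin n, ∑ j : Fin n, t * (x i.succ * B i j * y j.succ) :=
    Finset.sum_congr rfl fun i _ => Finset.sum_congr rfl fun j _ => by ring
  rw [h1, h2, h3]; ring

lemma payoff_bonus {n : ℕ} (B : Fin n → Fin n → ℝ) (k : Fin n) (b : ℝ) (f g : Fin n → ℝ) :
    payoff (fun i j => if j = k then B i j + b else B i j) f g
      = payoff B f g + (∑ i, f i) * (b * g k) := by
  unfold payoff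
  rw [Finset.sum_mul, ← Finset.sum_add_distrib]
  refine Finset.sum_congr rfl fun i _ => ?_
  have h : ∀ j : Fin n, f i * (if j = k then B i j + b else B i j) * g j
      = f i * B i j * g j + (if j = k then f i * (b * g j) else 0) := by
    intro j; split <;> ring
  rw [Finset.sum_congr rfl fun j _ => h j, Finset.sum_add_distrib,
    Finset.sum_ite_eq' univ k]
  simp

/-- a Nash equilibrium of G_t = (1−t)G₀ + tG₁ with x(0) < 1 and y(0) < 1,
after renormalizing away the 0-th strategies, is a Nash equilibrium of the game (A, B^b),
where B^b awards the column player a bonus b = δ·x(0)/(1 − x(0)) on column k. -/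
theorem nashEq_Gt_renormalized (n : ℕ) (hn : 1 ≤ n) (A B : Fin n → Fin n → ℝ)
    (hA : ∀ i j, A i j ∈ Set.Icc (0.9 : ℝ) 1.1)
    (hB : ∀ i j, B i j ∈ Set.Icc (0.9 : ℝ) 1.1)
    (k : Fin n) (δ : ℝ) (hδ : 0 ≤ δ)
    (t : ℝ) (ht : t ∈ Set.Ioc (0 : ℝ) 1)
    (x y : Fin (n + 1) → ℝ)
    (hNE : NashEq (fun i j => (1 - t) * R0 i j + t * R1 A i j)
                  (fun i j => (1 - t) * C0 i j + t * C1 B k δ i j) x y)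
    (hx0 : x 0 < 1) (hy0 : y 0 < 1) :
    NashEq A
      (fun i j => if j = k then B i j + δ * x 0 / (1 - x 0) else B i j)
      (fun i : Fin n => x i.succ / (1 - x 0))
      (fun j : Fin n => y j.succ / (1 - y 0)) := by
  obtain ⟨ht0, ht1⟩ := ht
  obtain ⟨hxS, hyS, hxOpt, hyOpt⟩ := hNE
  have hα : (0:ℝ) < 1 - x 0 := by linarith
  have hβ : (0:ℝ) < 1 - y 0 := by linarith
  have hxsum : ∑ i : Fin n, x i.succ = 1 - x 0 := by
    have h := hxS.2; rw [Fin.sum_univ_succ] at h; linarith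
  have hysum : ∑ j : Fin n, y j.succ = 1 - y 0 := by
    have h := hyS.2; rw [Fin.sum_univ_succ] at h; linarith
  have hx'sum : ∑ i : Fin n, x i.succ / (1 - x 0) = 1 := by
    rw [← Finset.sum_div, hxsum, div_self hα.ne']
  have hy'sum : ∑ j : Fin n, y j.succ / (1 - y 0) = 1 := by
    rw [← Finset.sum_div, hysum, div_self hβ.ne']
  have hpos : (0:ℝ) < t * ((1 - x 0) * (1 - y 0)) := mul_pos ht0 (mul_pos hα hβ)
  have hSx : ∑ i : Fin n, ∑ j : Fin n, x i.succ * A i j * y j.succ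
      = (1 - x 0) * (1 - y 0)
        * payoff A (fun i => x i.succ / (1 - x 0)) (fun j => y j.succ / (1 - y 0)) := by
    unfold payoff
    rw [Finset.mul_sum]
    refine Finset.sum_congr rfl fun i _ => ?_
    rw [Finset.mul_sum]
    refine Finset.sum_congr rfl fun j _ => ?_
    field_simp
  have hSxB : ∑ i : Fin n, ∑ j : Fin n, x i.succ * B i j * y j.succ
      = (1 - x 0) * (1 - y 0)
        * payoff B (fun i => x i.succ / (1 - x 0)) (fun j => y j.succ / (1 - y 0)) := by
    unfold payoff
    rw [Finset.mul_sum]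
    refine Finset.sum_congr rfl fun i _ => ?_
    rw [Finset.mul_sum]
    refine Finset.sum_congr rfl fun j _ => ?_
    field_simp
  refine ⟨⟨fun i => div_nonneg (hxS.1 i.succ) hα.le, hx'sum⟩,
    ⟨fun j => div_nonneg (hyS.1 j.succ) hβ.le, hy'sum⟩, ?_, ?_⟩
  · -- row optimality
    intro u hu
    set xt : Fin (n+1) → ℝ := Fin.cons (x 0) (fun i => (1 - x 0) * u i) with hxt
    have hxtS : xt ∈ stdSimplex ℝ (Fin (n+1)) := by
      constructor
      · intro i
        refine Fin.cases ?_ (fun i' => ?_) i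
        · simpa [hxt] using hxS.1 0
        · simp only [hxt, Fin.cons_succ]
          exact mul_nonneg hα.le (hu.1 i')
      · rw [Fin.sum_univ_succ]
        simp only [hxt, Fin.cons_zero, Fin.cons_succ, ← Finset.mul_sum, hu.2, mul_one]
        ring
    have key := hxOpt xt hxtS
    rw [payoff_row, payoff_row] at key
    simp only [hxt, Fin.cons_zero, Fin.cons_succ] at key
    have s1 : ∑ i : Fin n, (1 - x 0) * u i = 1 - x 0 := by
      rw [← Finset.mul_sum, hu.2, mul_one]
    have s2 : ∑ i : Fin n, ∑ j : Fin n, (1 - x 0) * u i * A i j * y j.succ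
        = (1 - x 0) * (1 - y 0) * payoff A u (fun j => y j.succ / (1 - y 0)) := by
      unfold payoff
      rw [Finset.mul_sum]
      refine Finset.sum_congr rfl fun i _ => ?_
      rw [Finset.mul_sum]
      refine Finset.sum_congr rfl fun j _ => ?_
      field_simp
    rw [s1, s2, hxsum, hSx] at key
    refine le_of_mul_le_mul_left ?_ hpos
    nlinarith [key]
  · -- column optimality
    intro v hv
    set yt : Fin (n+1) → ℝ := Fin.cons (y 0) (fun j => (1 - y 0) * v j) with hyt
    have hytS : yt ∈ stdSimplex ℝ (Fin (n+1)) := by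
      constructor
      · intro j
        refine Fin.cases ?_ (fun j' => ?_) j
        · simpa [hyt] using hyS.1 0
        · simp only [hyt, Fin.cons_succ]
          exact mul_nonneg hβ.le (hv.1 j')
      · rw [Fin.sum_univ_succ]
        simp only [hyt, Fin.cons_zero, Fin.cons_succ, ← Finset.mul_sum, hv.2, mul_one]
        ring
    have key := hyOpt yt hytS
    rw [payoff_col, payoff_col] at key
    simp only [hyt, Fin.cons_zero, Fin.cons_succ] at key
    have s1 : ∑ j : Fin n, (1 - y 0) * v j = 1 - y 0 := by
      rw [← Finset.mul_sum, hv.2, mul_one]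
    have s2 : ∑ i : Fin n, ∑ j : Fin n, x i.succ * B i j * ((1 - y 0) * v j)
        = (1 - x 0) * (1 - y 0) * payoff B (fun i => x i.succ / (1 - x 0)) v := by
      unfold payoff
      rw [Finset.mul_sum]
      refine Finset.sum_congr rfl fun i _ => ?_
      rw [Finset.mul_sum]
      refine Finset.sum_congr rfl fun j _ => ?_
      field_simp
    rw [s1, s2, hxsum, hysum, hSxB] at key
    rw [payoff_bonus, payoff_bonus, hx'sum]
    have e1 : t * ((1 - x 0) * (1 - y 0))
        * (1 * (δ * x 0 / (1 - x 0) * (y k.succ / (1 - y 0))))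
        = t * δ * x 0 * y k.succ := by
      field_simp
    have e2 : t * ((1 - x 0) * (1 - y 0)) * (1 * (δ * x 0 / (1 - x 0) * v k))
        = t * δ * x 0 * ((1 - y 0) * v k) := by
      field_simp
    refine le_of_mul_le_mul_left ?_ hpos
    nlinarith [key, e1, e2]
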